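/- Under the stated real hypotheses, the polynomial c_{N+1}(q), which has degree N+1, has all of its roots real and unequal; that is, c_{N+1} has exactly N+1 distinct real roots. -/

import Mathlib

open Polynomial


lemma tri_monic (n : ℕ) (a b : ℕ → ℝ) (p : ℕ → ℝ[X])
    (hp0 : p 0 = 1) (hp1 : p 1 = X)
    (hrec : ∀ k, 1 ≤ k → k ≤ n → p (k+1) = (X + C (b k)) * p k - C (a k) * p (k-1)) :
    ∀ k, k ≤ n + 1 → (p k).Monic ∧ (p k).natDegree = k := by
  intro k
  induction k using Nat.strong_induction_on with
  | _ k ih =>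
    match k with
    | 0 => intro _; simp [hp0, monic_one]
    | 1 => intro _; simp [hp1, monic_X]
    | (m+2) =>
      intro hle
      have hm1 : m + 1 ≤ n := by omega
      have h1 := ih (m+1) (by omega) (by omega)
      have h0 := ih m (by omega) (by omega)
      have hr := hrec (m+1) (by omega) hm1
      simp only [Nat.add_sub_cancel] at hr
      have hmon : ((X + C (b (m+1))) * p (m+1)).Monic :=
        (monic_X_add_C _).mul h1.1
      have hdeg : ((X + C (b (m+1))) * p (m+1)).natDegree = m + 2 := by
        rw [(monic_X_add_C _).natDegree_mul h1.1, natDegree_X_add_C, h1.2]; omega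
      have hdegw : ((X + C (b (m+1))) * p (m+1)).degree = ((m+2 : ℕ) : WithBot ℕ) := by
        rw [degree_eq_natDegree hmon.ne_zero, hdeg]
      have hlt : (-(C (a (m+1)) * p m)).degree < ((X + C (b (m+1))) * p (m+1)).degree := by
        rw [degree_neg, hdegw]
        calc (C (a (m+1)) * p m).degree ≤ 0 + (p m).degree :=
              le_trans (degree_mul_le _ _) (add_le_add degree_C_le le_rfl)
          _ ≤ (m : WithBot ℕ) := by
              rw [zero_add]
              simpa [h0.2] using degree_le_natDegree (p := p m)
          _ < ((m+2 : ℕ) : WithBot ℕ) := by exact_mod_cast Nat.lt_succ_of_lt (Nat.lt_succ_self m)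
      have : p (m+2) = (X + C (b (m+1))) * p (m+1) + -(C (a (m+1)) * p m) := by
        rw [hr]; ring
      rw [this]
      refine ⟨hmon.add_of_left hlt, ?_⟩
      exact natDegree_eq_of_degree_eq_some (by rw [degree_add_eq_left_of_degree_lt hlt, hdegw])

lemma tri_wron (n : ℕ) (a b : ℕ → ℝ) (p : ℕ → ℝ[X])
    (ha : ∀ k, 1 ≤ k → k ≤ n → 0 < a k)
    (hp0 : p 0 = 1) (hp1 : p 1 = X)
    (hrec : ∀ k, 1 ≤ k → k ≤ n → p (k+1) = (X + C (b k)) * p k - C (a k) * p (k-1)) :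
    ∀ k, k ≤ n → ∀ x : ℝ,
      0 < eval x (derivative (p (k+1)) * p k - p (k+1) * derivative (p k)) := by
  intro k
  induction k with
  | zero => intro _ x; simp [hp0, hp1]
  | succ k ih =>
    intro hle x
    have ihx := ih (by omega) x
    have hr := hrec (k+1) (by omega) hle
    simp only [Nat.add_sub_cancel] at hr
    have hak := ha (k+1) (by omega) hle
    rw [hr]
    simp only [derivative_sub, derivative_mul, derivative_add, derivative_X,
      derivative_C, eval_sub, eval_mul, eval_add, eval_X, eval_C, zero_mul,
      add_zero, one_mul, zero_add, eval_zero] at *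
    nlinarith [sq_nonneg (eval x (p (k+1))), ihx, hak,
      mul_pos hak ihx]

lemma tri_roots_real (n : ℕ) (a b : ℕ → ℝ) (p : ℕ → ℝ[X])
    (ha : ∀ k, 1 ≤ k → k ≤ n → 0 < a k)
    (hp0 : p 0 = 1) (hp1 : p 1 = X)
    (hrec : ∀ k, 1 ≤ k → k ≤ n → p (k+1) = (X + C (b k)) * p k - C (a k) * p (k-1)) :
    ∀ z : ℂ, aeval z (p (n+1)) = 0 → z.im = 0 := by
  intro z hz
  set u : ℕ → ℂ := fun k => aeval z (p k) with hu
  set w : ℕ → ℝ := fun k => ∏ j ∈ Finset.range k, a (j+1) with hwdef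
  have hw : ∀ k, k ≤ n → 0 < w k := by
    intro k hk
    exact Finset.prod_pos (fun j hj => ha (j+1) (by omega)
      (by have := Finset.mem_range.mp hj; omega))
  have hu0 : u 0 = 1 := by simp [hu, hp0]
  have hu1 : u 1 = z := by simp [hu, hp1]
  have hurec : ∀ k, 1 ≤ k → k ≤ n →
      u (k+1) = (z + (b k : ℂ)) * u k - (a k : ℂ) * u (k-1) := by
    intro k h1 h2
    have := congrArg (aeval z) (hrec k h1 h2)
    simpa [hu, map_sub, map_mul, map_add] using this
  set s : ℕ → ℝ := fun k => ∑ j ∈ Finset.range (k+1), Complex.normSq (u j) / w j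
    with hsdef
  have claim : ∀ k, k ≤ n →
      u (k+1) * (starRingEnd ℂ) (u k) - (starRingEnd ℂ) (u (k+1)) * u k
        = (z - (starRingEnd ℂ) z) * ((w k * s k : ℝ) : ℂ) := by
    intro k
    induction k with
    | zero =>
      intro _
      have : w 0 * s 0 = 1 := by
        simp [hwdef, hsdef, hu0]
      rw [this, hu0, hu1]
      simp
    | succ k ih =>
      intro hle
      have ihk := ih (by omega)
      have hu2 := hurec (k+1) (by omega) hle
      simp only [Nat.add_sub_cancel] at hu2
      have hconj : (starRingEnd ℂ) (u (k+2))
          = ((starRingEnd ℂ) z + (b (k+1) : ℂ)) * (starRingEnd ℂ) (u (k+1))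
            - (a (k+1) : ℂ) * (starRingEnd ℂ) (u k) := by
        rw [hu2]; simp [map_sub, map_mul, map_add, Complex.conj_ofReal]
      have e1 : u (k+2) * (starRingEnd ℂ) (u (k+1)) - (starRingEnd ℂ) (u (k+2)) * u (k+1)
          = (z - (starRingEnd ℂ) z) * (u (k+1) * (starRingEnd ℂ) (u (k+1)))
            + (a (k+1) : ℂ) * (u (k+1) * (starRingEnd ℂ) (u k)
              - (starRingEnd ℂ) (u (k+1)) * u k) := by
        rw [hconj, hu2]
        ring
      rw [e1, ihk, Complex.mul_conj]
      have hreal : w (k+1) * s (k+1)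
          = Complex.normSq (u (k+1)) + a (k+1) * (w k * s k) := by
        have hwk1 : w (k+1) = w k * a (k+1) := Finset.prod_range_succ _ _
        have hsk1 : s (k+1) = s k + Complex.normSq (u (k+1)) / w (k+1) := by
          simp [hsdef, Finset.sum_range_succ]
        have hwpos : (0:ℝ) < w (k+1) := hw (k+1) hle
        rw [hsk1, hwk1] at *
        rw [mul_add, mul_div_assoc', mul_div_right_comm, div_self hwpos.ne', one_mul]
        ring
      rw [hreal]
      push_cast
      ring
  have hun1 : u (n+1) = 0 := hz
  have hfin := claim n le_rfl
  rw [hun1] at hfin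
  simp only [map_zero, zero_mul, mul_zero, sub_zero, zero_sub, neg_eq_zero] at hfin
  have hspos : 0 < s n := by
    refine Finset.sum_pos' (fun j hj => ?_) ⟨0, Finset.mem_range.mpr (by omega), ?_⟩
    · exact div_nonneg (Complex.normSq_nonneg _) (hw j (by have := Finset.mem_range.mp hj; omega)).le
    · rw [hu0]
      have : w 0 = 1 := by simp [hwdef]
      simp [this]
  have hwn : 0 < w n * s n := mul_pos (hw n le_rfl) hspos
  have : z - (starRingEnd ℂ) z = 0 := by
    rcases mul_eq_zero.mp hfin.symm with h | h
    · exact h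
    · exact absurd (by exact_mod_cast h) hwn.ne'
  exact Complex.conj_eq_iff_im.mp (sub_eq_zero.mp this).symm

lemma tri_main (n : ℕ) (a b : ℕ → ℝ) (p : ℕ → ℝ[X])
    (ha : ∀ k, 1 ≤ k → k ≤ n → 0 < a k)
    (hp0 : p 0 = 1) (hp1 : p 1 = X)
    (hrec : ∀ k, 1 ≤ k → k ≤ n → p (k+1) = (X + C (b k)) * p k - C (a k) * p (k-1)) :
    (p (n+1)).Monic ∧ (p (n+1)).natDegree = n+1 ∧
    ∃ S : Finset ℝ, S.card = n+1 ∧ (∀ x ∈ S, (p (n+1)).IsRoot x) ∧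
      ∀ x : ℝ, (p (n+1)).IsRoot x → x ∈ S := by
  classical
  obtain ⟨hmon, hdeg⟩ := tri_monic n a b p hp0 hp1 hrec (n+1) le_rfl
  set q := p (n+1) with hqdef
  have hq0 : q ≠ 0 := hmon.ne_zero
  have hder : ∀ x : ℝ, q.IsRoot x → eval x (derivative q) ≠ 0 := by
    intro x hx hd
    have hW := tri_wron n a b p ha hp0 hp1 hrec n le_rfl x
    rw [← hqdef] at hW
    simp only [eval_sub, eval_mul] at hW
    rw [hx.eq_zero, hd] at hW
    simp at hW
  set f : ℝ →+* ℂ := algebraMap ℝ ℂ with hfdef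
  set qc := q.map f with hqcdef
  have hqc0 : qc ≠ 0 := (Polynomial.map_ne_zero_iff f.injective).mpr hq0
  have hcard : qc.roots.card = n + 1 := by
    rw [← (IsAlgClosed.splits qc).natDegree_eq_card_roots, hqcdef, natDegree_map, hdeg]
  have hreal : ∀ z : ℂ, z ∈ qc.roots → z.im = 0 := by
    intro z hzr
    have hz : eval z qc = 0 := (mem_roots hqc0).mp hzr
    have : aeval z q = 0 := by rwa [aeval_def, ← eval_map]
    exact tri_roots_real n a b p ha hp0 hp1 hrec z this
  have hrootreal : ∀ z : ℂ, z ∈ qc.roots → eval (z.re : ℝ) q = 0 ∧ z = (z.re : ℂ) := by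
    intro z hzr
    have him := hreal z hzr
    have hz2 : z = (z.re : ℂ) := by
      apply Complex.ext <;> simp [him]
    have hz : eval z qc = 0 := (mem_roots hqc0).mp hzr
    rw [hz2] at hz
    rw [hqcdef, eval_map, show ((z.re : ℂ)) = f z.re from rfl, eval₂_at_apply] at hz
    exact ⟨f.injective (by rw [map_zero]; exact hz), hz2⟩
  have hnodup : qc.roots.Nodup := by
    rw [Multiset.nodup_iff_count_le_one]
    intro z
    by_contra hcnt
    push_neg at hcnt
    have hmem : z ∈ qc.roots := Multiset.count_pos.mp (by omega)
    have hdvd : (X - C z) ^ 2 ∣ qc := by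
      have h1 : (X - C z) ^ 2 ∣ (X - C z) ^ (qc.roots.count z) :=
        pow_dvd_pow _ (by rwa [count_roots] at hcnt ⊢)
      exact h1.trans ((count_roots qc) ▸ pow_rootMultiplicity_dvd qc z)
    obtain ⟨r, hr⟩ := hdvd
    have hdz : eval z (derivative qc) = 0 := by
      rw [hr]
      simp [derivative_mul, derivative_pow]
    obtain ⟨hre, hz2⟩ := hrootreal z hmem
    have : eval (z.re : ℝ) (derivative q) = 0 := by
      rw [hz2] at hdz
      rw [hqcdef, derivative_map, eval_map, show ((z.re : ℂ)) = f z.re from rfl,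
        eval₂_at_apply] at hdz
      exact f.injective (by rw [map_zero]; exact hdz)
    exact hder z.re hre this
  have hfincard : qc.roots.toFinset.card = n + 1 := by
    rw [Multiset.toFinset_card_of_nodup hnodup, hcard]
  refine ⟨hmon, hdeg, q.roots.toFinset, ?_, ?_, ?_⟩
  · have himg : q.roots.toFinset.image (fun x : ℝ => (x : ℂ)) = qc.roots.toFinset := by
      apply Finset.ext
      intro z
      simp only [Finset.mem_image, Multiset.mem_toFinset]
      constructor
      · rintro ⟨x, hx, rfl⟩
        have hx' : eval x q = 0 := (mem_roots hq0).mp hx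
        refine (mem_roots hqc0).mpr ?_
        show eval _ qc = 0
        rw [hqcdef, eval_map, show ((x : ℂ)) = f x from rfl, eval₂_at_apply, hx']
        simp
      · intro hz
        obtain ⟨hre, hz2⟩ := hrootreal z hz
        exact ⟨z.re, (mem_roots hq0).mpr hre, hz2.symm⟩
    have := Finset.card_image_of_injective q.roots.toFinset
      (Complex.ofReal_injective)
    rw [himg, hfincard] at this
    exact this.symm
  · intro x hx
    exact (mem_roots hq0).mp (Multiset.mem_toFinset.mp hx)
  · intro x hx
    exact Multiset.mem_toFinset.mpr ((mem_roots hq0).mpr hx)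

/-- The polynomial `c (N+1)` has degree `N+1` and all of its roots
are real and unequal: it has exactly `N+1` distinct real roots. -/
theorem heun_cNplus1_real_distinct_roots
    (N : ℕ) (γ1 γ2 γ3 t1 t2 t3 α β : ℝ)
    (ht12 : t1 ≠ t2) (ht13 : t1 ≠ t3) (ht23 : t2 ≠ t3)
    (hγ3 : 0 < γ3)
    (hsum : 1 < γ1 + γ2 + γ3 + N)
    (hprod : (t1 - t3) * (t2 - t3) < 0)
    (hαβ : ({α, β} : Set ℝ) = ({-(N : ℝ), γ1 + γ2 + γ3 + (N : ℝ) - 1} : Set ℝ))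
    (c : ℕ → Polynomial ℝ)
    (hc0 : c 0 = 1)
    (hc1 : Polynomial.C ((t1 - t3) * (t2 - t3) * γ3) * c 1 = Polynomial.X * c 0)
    (hrec : ∀ m : ℕ,
      Polynomial.C ((t1 - t3) * (t2 - t3) * ((m : ℝ) + 2) * ((m : ℝ) + 1 + γ3)) * c (m + 2)
        = Polynomial.C (-(((m : ℝ) + α) * ((m : ℝ) + β))) * c m
          + (Polynomial.C (((m : ℝ) + 1) * (((m : ℝ) + γ3) * (t1 + t2 - 2 * t3)
                + (t2 - t3) * γ1 + (t1 - t3) * γ2)) + Polynomial.X) * c (m + 1))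
    : (c (N + 1)).degree = ((N + 1 : ℕ) : WithBot ℕ) ∧
      ∃ S : Finset ℝ, S.card = N + 1 ∧ (∀ x ∈ S, (c (N + 1)).IsRoot x) ∧
        ∀ x : ℝ, (c (N + 1)).IsRoot x → x ∈ S := by
  have hP : (t1 - t3) * (t2 - t3) < 0 := hprod
  have hG : (0:ℝ) < γ1 + γ2 + γ3 + (N:ℝ) - 1 := by linarith
  have hab : ∀ x : ℝ, (x + α) * (x + β)
      = (x - (N:ℝ)) * (x + (γ1 + γ2 + γ3 + (N:ℝ) - 1)) := by
    intro x
    rcases Set.pair_eq_pair_iff.mp hαβ with ⟨h1, h2⟩ | ⟨h1, h2⟩ <;> rw [h1, h2] <;> ring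
  set κ : ℕ → ℝ := fun j => (t1 - t3) * (t2 - t3) * ((j:ℝ)+1) * ((j:ℝ)+γ3) with hκdef
  have hκneg : ∀ j, κ j < 0 := by
    intro j
    have h1 : (0:ℝ) < (j:ℝ) + 1 := by positivity
    have h2 : (0:ℝ) < (j:ℝ) + γ3 := by positivity
    have := mul_neg_of_neg_of_pos (mul_neg_of_neg_of_pos hP h1) h2
    simpa [hκdef] using this
  set Λ : ℕ → ℝ := fun k => ∏ j ∈ Finset.range k, κ j with hΛdef
  have hΛstep : ∀ k, Λ (k+1) = Λ k * κ k := fun k => Finset.prod_range_succ _ _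
  have hΛne : ∀ k, Λ k ≠ 0 := by
    intro k
    exact Finset.prod_ne_zero_iff.mpr (fun j _ => (hκneg j).ne)
  set p : ℕ → ℝ[X] := fun k => C (Λ k) * c k with hpdef
  set a : ℕ → ℝ := fun k => (((k:ℝ) - 1 + α) * ((k:ℝ) - 1 + β)) * κ (k-1) with hadef
  set b : ℕ → ℝ := fun k => (k:ℝ) * (((k:ℝ) - 1 + γ3) * (t1 + t2 - 2*t3)
    + (t2-t3)*γ1 + (t1-t3)*γ2) with hbdef
  have hp0 : p 0 = 1 := by simp [hpdef, hΛdef, hc0]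
  have hp1 : p 1 = X := by
    have hΛ1 : Λ 1 = (t1-t3)*(t2-t3)*γ3 := by
      simp [hΛdef, hκdef]
    show C (Λ 1) * c 1 = X
    rw [hΛ1, hc1, hc0, mul_one]
  have ha : ∀ k, 1 ≤ k → k ≤ N → 0 < a k := by
    intro k h1 h2
    have hkN : (k:ℝ) ≤ (N:ℝ) := by exact_mod_cast h2
    have hk1 : (1:ℝ) ≤ (k:ℝ) := by exact_mod_cast h1
    have hprod1 : ((k:ℝ) - 1 + α) * ((k:ℝ) - 1 + β) < 0 := by
      rw [show ((k:ℝ) - 1 + α) * ((k:ℝ) - 1 + β) = (((k:ℝ)-1) + α) * (((k:ℝ)-1) + β) from rfl,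
        hab]
      apply mul_neg_of_neg_of_pos <;> nlinarith
    exact mul_pos_of_neg_of_neg hprod1 (hκneg (k-1))
  have hrecp : ∀ k, 1 ≤ k → k ≤ N → p (k+1) = (X + C (b k)) * p k - C (a k) * p (k-1) := by
    intro k h1 _
    obtain ⟨m, rfl⟩ : ∃ m, k = m + 1 := ⟨k-1, by omega⟩
    have hr := hrec m
    have hκm1 : κ (m+1) = (t1 - t3) * (t2 - t3) * ((m:ℝ)+2) * ((m:ℝ)+1+γ3) := by
      simp only [hκdef]; push_cast; ring
    have hb' : C (b (m+1)) = C (((m:ℝ) + 1) * (((m : ℝ) + γ3) * (t1 + t2 - 2 * t3)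
        + (t2 - t3) * γ1 + (t1 - t3) * γ2)) := by
      congr 1
      simp only [hbdef]; push_cast; ring
    have ha' : C (a (m+1)) = C ((((m:ℝ) + α) * ((m:ℝ) + β)) * κ m) := by
      congr 1
      simp only [hadef, Nat.add_sub_cancel]; push_cast; ring
    show C (Λ (m+2)) * c (m+2) = (X + C (b (m+1))) * (C (Λ (m+1)) * c (m+1))
      - C (a (m+1)) * (C (Λ m) * c m)
    rw [hΛstep (m+1), map_mul, mul_assoc, hκm1, hr, hb', ha', hΛstep m]
    simp only [map_mul, map_neg]
    ring
  obtain ⟨hmon, hdeg, S, hScard, hSroot, hSall⟩ := tri_main N a b p ha hp0 hp1 hrecp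
  have hpc : p (N+1) = C (Λ (N+1)) * c (N+1) := rfl
  have hdegc : (c (N+1)).degree = ((N + 1 : ℕ) : WithBot ℕ) := by
    have h1 : (p (N+1)).degree = ((N+1 : ℕ) : WithBot ℕ) := by
      rw [degree_eq_natDegree hmon.ne_zero, hdeg]
    rw [hpc, degree_C_mul (hΛne (N+1))] at h1
    exact h1
  have hiff : ∀ x : ℝ, (c (N+1)).IsRoot x ↔ (p (N+1)).IsRoot x := by
    intro x
    simp only [IsRoot, hpc, eval_mul, eval_C]
    constructor
    · intro h; rw [h, mul_zero]
    · intro h; exact (mul_eq_zero.mp h).resolve_left (hΛne (N+1))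
  exact ⟨hdegc, S, hScard, fun x hx => (hiff x).mpr (hSroot x hx),
    fun x hx => hSall x ((hiff x).mp hx)⟩
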